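/- Let q_1, …, q_n be unit vectors in ℝ^d and t ≥ 1. If there exist weights ω_1, …, ω_n ∈ ℝ such that {(q_j, ω_j)}_{j=1}^n is a cubature for Hom_{2t}(S^{d−1}), then the homogeneous polynomials x ↦ (q_j · x)^t, j = 1, …, n, span Hom_t(ℝ^d). -/

import Mathlib

open MvPolynomial MeasureTheory

/-- The unit sphere `S^{d-1}` in `ℝ^d`. -/
noncomputable def unitSphere (d : ℕ) := Metric.sphere (0 : EuclideanSpace ℝ (Fin d)) 1

/-- A linear isometry (element of `O(d)`) maps the unit sphere to itself. -/
noncomputable def sphereMap (d : ℕ) (f : EuclideanSpace ℝ (Fin d) ≃ₗᵢ[ℝ] EuclideanSpace ℝ (Fin d))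
    (x : unitSphere d) : unitSphere d :=
  ⟨f x, by
    have hx := x.2
    simp only [unitSphere, mem_sphere_iff_norm, sub_zero] at hx ⊢
    rw [f.norm_map]; exact hx⟩

open Finset in
lemma eval_smul_of_homog {d t : ℕ} {p : MvPolynomial (Fin d) ℝ} (hp : p.IsHomogeneous t)
    (c : ℝ) (z : Fin d → ℝ) : eval (c • z) p = c ^ t * eval z p := by
  rw [eval_eq', eval_eq', Finset.mul_sum]
  refine Finset.sum_congr rfl fun α hα => ?_
  have hdeg : ∑ i, α i = t := by
    have h1 : α.degree = t := by
      by_contra h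
      exact (mem_support_iff.mp hα) (hp.coeff_eq_zero h)
    rw [← h1, Finsupp.degree]
    exact (Finset.sum_subset (Finset.subset_univ _) (fun i _ hi => by
      simpa using Finsupp.notMem_support_iff.mp hi)).symm
  calc coeff α p * ∏ i, (c • z) i ^ α i
      = coeff α p * (c ^ (∑ i, α i) * ∏ i, z i ^ α i) := by
        rw [← Finset.prod_pow_eq_pow_sum, ← Finset.prod_mul_distrib]
        simp [mul_pow]
    _ = c ^ t * (coeff α p * ∏ i, z i ^ α i) := by rw [hdeg]; ring

lemma pow_linear_eq {d t : ℕ} (a : Fin d → ℝ) :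
    (∑ i, C (a i) * X i : MvPolynomial (Fin d) ℝ) ^ t =
      ∑ k ∈ Finset.piAntidiag Finset.univ t,
        ((Nat.multinomial Finset.univ k : ℝ) * ∏ i, a i ^ k i) •
          ∏ i, (X i : MvPolynomial (Fin d) ℝ) ^ k i := by
  rw [Finset.sum_pow_eq_sum_piAntidiag]
  refine Finset.sum_congr rfl fun k _ => ?_
  rw [smul_eq_C_mul]
  have : ∏ i, (C (a i) * X i : MvPolynomial (Fin d) ℝ) ^ k i
      = C (∏ i, a i ^ k i) * ∏ i, (X i : MvPolynomial (Fin d) ℝ) ^ k i := by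
    rw [map_prod, ← Finset.prod_mul_distrib]
    exact Finset.prod_congr rfl fun i _ => by rw [mul_pow, map_pow]
  rw [this, map_mul, ← mul_assoc]
  norm_cast

lemma prod_X_pow_univ {d : ℕ} (β : Fin d →₀ ℕ) :
    (∏ i, (X i : MvPolynomial (Fin d) ℝ) ^ β i) = monomial β 1 := by
  rw [← prod_X_pow_eq_monomial]
  exact (Finset.prod_subset (Finset.subset_univ _) (fun i _ hi => by
    simp [Finsupp.notMem_support_iff.mp hi])).symm

lemma sphereMap_continuous (d : ℕ) (f : EuclideanSpace ℝ (Fin d) ≃ₗᵢ[ℝ] EuclideanSpace ℝ (Fin d)) :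
    Continuous (sphereMap d f) :=
  Continuous.subtype_mk (f.continuous.comp continuous_subtype_val) _

lemma sphereMap_symm_apply (d : ℕ) (f : EuclideanSpace ℝ (Fin d) ≃ₗᵢ[ℝ] EuclideanSpace ℝ (Fin d))
    (x : unitSphere d) : sphereMap d f.symm (sphereMap d f x) = x := by
  apply Subtype.ext; simp [sphereMap]

lemma open_pos (d : ℕ) (σ : Measure (unitSphere d)) [IsProbabilityMeasure σ]
    (hinv : ∀ f : EuclideanSpace ℝ (Fin d) ≃ₗᵢ[ℝ] EuclideanSpace ℝ (Fin d),
      Measure.map (sphereMap d f) σ = σ)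
    (U : Set (unitSphere d)) (hU : IsOpen U) (x₀ : unitSphere d) (hx₀ : x₀ ∈ U) :
    σ U ≠ 0 := by
  intro h0
  have hnorm : ∀ y : unitSphere d, ‖(y : EuclideanSpace ℝ (Fin d))‖ = 1 := by
    intro y
    have hy := y.2
    simpa only [unitSphere, mem_sphere_iff_norm, sub_zero] using hy
  set F : unitSphere d → (EuclideanSpace ℝ (Fin d) ≃ₗᵢ[ℝ] EuclideanSpace ℝ (Fin d)) :=
    fun y => Submodule.reflection (ℝ ∙ ((x₀ : EuclideanSpace ℝ (Fin d)) - y))ᗮ with hF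
  have hFx : ∀ y : unitSphere d, F y (x₀ : EuclideanSpace ℝ (Fin d)) = y := by
    intro y
    exact Submodule.reflection_sub (by rw [hnorm, hnorm])
  set V : unitSphere d → Set (unitSphere d) := fun y => sphereMap d (F y) '' U with hV
  have hVeq : ∀ y, V y = sphereMap d (F y).symm ⁻¹' U := by
    intro y
    ext x
    constructor
    · rintro ⟨u, hu, rfl⟩
      simpa [Set.mem_preimage, sphereMap_symm_apply] using hu
    · intro hx
      refine ⟨sphereMap d (F y).symm x, hx, ?_⟩
      apply Subtype.ext; simp [sphereMap]
  have hVopen : ∀ y, IsOpen (V y) := fun y => by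
    rw [hVeq]; exact hU.preimage (sphereMap_continuous d _)
  have hVnull : ∀ y, σ (V y) = 0 := by
    intro y
    have h1 : σ (V y) = Measure.map (sphereMap d (F y)) σ (V y) := by rw [hinv]
    rw [h1, Measure.map_apply (sphereMap_continuous d _).measurable (hVopen y).measurableSet, hV]
    have hinj : Function.Injective (sphereMap d (F y)) := by
      intro a b hab
      have := congrArg (sphereMap d (F y).symm) hab
      rwa [sphereMap_symm_apply, sphereMap_symm_apply] at this
    rw [Set.preimage_image_eq U hinj]
    exact h0
  have hcover : (Set.univ : Set (unitSphere d)) ⊆ ⋃ y, V y := by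
    intro x _
    exact Set.mem_iUnion.mpr ⟨x, ⟨x₀, hx₀, Subtype.ext (hFx x)⟩⟩
  haveI : CompactSpace (unitSphere d) := by unfold unitSphere; infer_instance
  obtain ⟨s, hs⟩ := isCompact_univ.elim_finite_subcover V hVopen hcover
  have h1 : (σ Set.univ) ≤ ∑ y ∈ s, σ (V y) :=
    le_trans (measure_mono hs) (measure_biUnion_finset_le s V)
  rw [measure_univ] at h1
  simp [hVnull] at h1

/-- If there are weights `ω j` such that `{(q j, ω j)}` is a cubature for
`Hom_{2t}(S^{d-1})` (with respect to the rotation-invariant probability measure on the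
sphere), then the polynomials `x ↦ (q j ⬝ x)^t` span `Hom_t(ℝ^d)`. -/
theorem frame_of_cubature (d n t : ℕ) (ht : 1 ≤ t)
    (q : Fin n → EuclideanSpace ℝ (Fin d)) (hq : ∀ j, ‖q j‖ = 1)
    (σ : Measure (unitSphere d)) [IsProbabilityMeasure σ]
    (hinv : ∀ f : EuclideanSpace ℝ (Fin d) ≃ₗᵢ[ℝ] EuclideanSpace ℝ (Fin d),
      Measure.map (sphereMap d f) σ = σ)
    (hcub : ∃ ω : Fin n → ℝ, ∀ p ∈ MvPolynomial.homogeneousSubmodule (Fin d) ℝ (2 * t),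
      ∫ x : unitSphere d,
          MvPolynomial.eval (fun i => (x : EuclideanSpace ℝ (Fin d)) i) p ∂σ =
        ∑ j, ω j * MvPolynomial.eval (fun i => q j i) p) :
    Submodule.span ℝ
        (Set.range fun j => (∑ i, MvPolynomial.C (q j i) * MvPolynomial.X i) ^ t) =
      MvPolynomial.homogeneousSubmodule (Fin d) ℝ t := by
  classical
  obtain ⟨ω, hω⟩ := hcub
  set gen : Fin n → MvPolynomial (Fin d) ℝ :=
    fun j => (∑ i, MvPolynomial.C (q j i) * MvPolynomial.X i) ^ t with hgen
  have hle : Submodule.span ℝ (Set.range gen) ≤ homogeneousSubmodule (Fin d) ℝ t := by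
    rw [Submodule.span_le]
    rintro _ ⟨j, rfl⟩
    rw [SetLike.mem_coe, mem_homogeneousSubmodule]
    have h1 : (∑ i, MvPolynomial.C (q j i) * MvPolynomial.X i).IsHomogeneous 1 :=
      IsHomogeneous.sum _ _ _ fun i _ => isHomogeneous_C_mul_X _ _
    simpa using h1.pow t
  by_contra hne
  have hlt : Submodule.span ℝ (Set.range gen) < homogeneousSubmodule (Fin d) ℝ t :=
    hle.lt_of_ne hne
  obtain ⟨p₀, hp₀mem, hp₀not⟩ := SetLike.exists_of_lt hlt
  obtain ⟨f, hf, hfmap⟩ := Submodule.exists_dual_map_eq_bot_of_notMem hp₀not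
    inferInstance
  have hfspan : ∀ r ∈ Submodule.span ℝ (Set.range gen), f r = 0 := by
    intro r hr
    have : f r ∈ Submodule.map f (Submodule.span ℝ (Set.range gen)) :=
      Submodule.mem_map_of_mem hr
    rwa [hfmap, Submodule.mem_bot] at this
  set A := Finset.piAntidiag (Finset.univ : Finset (Fin d)) t with hA
  set m : (Fin d → ℕ) → MvPolynomial (Fin d) ℝ := fun k => ∏ i, X i ^ k i with hm
  set p : MvPolynomial (Fin d) ℝ :=
    ∑ k ∈ A, ((Nat.multinomial Finset.univ k : ℝ) * f (m k)) • m k with hp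
  -- p is homogeneous of degree t
  have hmhom : ∀ k ∈ A, (m k).IsHomogeneous t := by
    intro k hk
    have hsum : ∑ i, k i = t := (Finset.mem_piAntidiag.mp hk).1
    have := IsHomogeneous.prod Finset.univ (fun i => (X i : MvPolynomial (Fin d) ℝ)^ k i) k
      (fun i _ => isHomogeneous_X_pow i (k i))
    rwa [hsum] at this
  have hpmem : p ∈ homogeneousSubmodule (Fin d) ℝ t := by
    refine Submodule.sum_mem _ fun k hk => Submodule.smul_mem _ _ ?_
    rw [mem_homogeneousSubmodule]
    exact hmhom k hk
  have hph : p.IsHomogeneous t := (mem_homogeneousSubmodule _ _).mp hpmem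
  have hmdef : ∀ k : Fin d → ℕ, m k = monomial (Finsupp.equivFunOnFinite.symm k) (1 : ℝ) := by
    intro k
    rw [hm]
    show ∏ i, (X i : MvPolynomial (Fin d) ℝ) ^ k i = _
    rw [← prod_X_pow_univ (Finsupp.equivFunOnFinite.symm k)]
    exact Finset.prod_congr rfl fun i _ => by simp
  -- eval of p
  have heval : ∀ a : Fin d → ℝ, eval a p = f ((∑ i, C (a i) * X i) ^ t) := by
    intro a
    rw [pow_linear_eq a, map_sum f, hp, map_sum (eval a)]
    refine Finset.sum_congr rfl fun k hk => ?_
    rw [f.map_smul, smul_eq_mul, smul_eq_C_mul, map_mul, eval_C]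
    have h3 : eval a (m k) = ∏ i, a i ^ k i := by
      rw [hm, map_prod]
      exact Finset.prod_congr rfl fun i _ => by rw [map_pow, eval_X]
    rw [h3]
    ring
  have hevalq : ∀ j, eval (fun i => q j i) p = 0 := by
    intro j
    rw [heval]
    exact hfspan _ (Submodule.subset_span (Set.mem_range_self j))
  -- p ≠ 0
  have hpne : p ≠ 0 := by
    intro hp0
    have hfm : ∀ k ∈ A, f (m k) = 0 := by
      intro k hk
      have h1 := congrArg (coeff (Finsupp.equivFunOnFinite.symm k)) hp0
      rw [hp, coeff_sum, coeff_zero] at h1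
      have h2 : ∀ k' ∈ A, coeff (Finsupp.equivFunOnFinite.symm k)
          (((Nat.multinomial Finset.univ k' : ℝ) * f (m k')) • m k')
          = if k' = k then (Nat.multinomial Finset.univ k : ℝ) * f (m k) else 0 := by
        intro k' _
        rw [coeff_smul, hmdef k', coeff_monomial]
        by_cases hkk : k' = k
        · subst hkk; rw [if_pos rfl, if_pos rfl, ← hmdef]; simp
        · rw [if_neg (fun hcon => hkk (Finsupp.equivFunOnFinite.symm.injective hcon)),
            if_neg hkk, smul_zero]
      rw [Finset.sum_congr rfl h2, Finset.sum_ite_eq' A k _] at h1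
      rw [if_pos hk] at h1
      have hmult : (Nat.multinomial Finset.univ k : ℝ) ≠ 0 := by
        exact_mod_cast (Nat.multinomial_pos _ _).ne'
      exact (mul_eq_zero.mp h1).resolve_left hmult
    -- f vanishes on p₀
    apply hf
    rw [p₀.as_sum, map_sum f]
    refine Finset.sum_eq_zero fun α hα => ?_
    have hmono : monomial α (coeff α p₀) = (coeff α p₀) • monomial α (1 : ℝ) := by
      rw [smul_monomial, smul_eq_mul, mul_one]
    rw [hmono, f.map_smul, smul_eq_mul]
    have hmem : (⇑α : Fin d → ℕ) ∈ A := by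
      rw [hA, Finset.mem_piAntidiag]
      refine ⟨?_, fun i _ => Finset.mem_univ i⟩
      have hdeg : α.degree = t := by
        by_contra h
        exact (mem_support_iff.mp hα)
          (((mem_homogeneousSubmodule _ _).mp hp₀mem).coeff_eq_zero h)
      rw [← hdeg, Finsupp.degree]
      exact (Finset.sum_subset (Finset.subset_univ _) (fun i _ hi => by
        simpa using Finsupp.notMem_support_iff.mp hi)).symm
    have hmα : m (⇑α) = monomial α (1 : ℝ) := by
      rw [hmdef, Finsupp.equivFunOnFinite_symm_coe]
    rw [← hmα, hfm _ hmem, mul_zero]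
  -- find a point on the sphere where p is nonzero
  have hz : ∃ z : Fin d → ℝ, eval z p ≠ 0 := by
    by_contra h
    push_neg at h
    exact hpne (hph.eq_zero_of_forall_eval_eq_zero h)
  obtain ⟨z, hz⟩ := hz
  have heval0 : eval (0 : Fin d → ℝ) p = 0 := by
    have := eval_smul_of_homog hph 0 z
    rw [zero_smul, zero_pow (by omega : t ≠ 0), zero_mul] at this
    exact this
  have hzne : z ≠ 0 := by
    intro h; rw [h] at hz; exact hz heval0
  set ze : EuclideanSpace ℝ (Fin d) := (WithLp.equiv 2 (Fin d → ℝ)).symm z with hze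
  have hzene : ze ≠ 0 := by
    intro h
    apply hzne
    have := congrArg (WithLp.equiv 2 (Fin d → ℝ)) h
    simpa [hze] using this
  have hnorm_pos : (0 : ℝ) < ‖ze‖ := norm_pos_iff.mpr hzene
  set c : ℝ := ‖ze‖⁻¹ with hc
  have hcne : c ≠ 0 := inv_ne_zero hnorm_pos.ne'
  set xE : EuclideanSpace ℝ (Fin d) := c • ze with hxE
  have hxEnorm : ‖xE‖ = 1 := by
    rw [hxE, norm_smul, hc, norm_inv, norm_norm, inv_mul_cancel₀ hnorm_pos.ne']
  have hxmem : xE ∈ unitSphere d := by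
    simp only [unitSphere, mem_sphere_iff_norm, sub_zero]
    exact hxEnorm
  set X₀ : unitSphere d := ⟨xE, hxmem⟩ with hX₀
  -- coordinates of X₀
  have hcoords : (fun i => (X₀ : EuclideanSpace ℝ (Fin d)) i) = c • z := by
    funext i
    show xE i = c * z i
    rw [hxE]
    simp [hze]
  have hevalX₀ : eval (fun i => (X₀ : EuclideanSpace ℝ (Fin d)) i) p ≠ 0 := by
    rw [hcoords, eval_smul_of_homog hph]
    exact mul_ne_zero (pow_ne_zero t hcne) hz
  -- cubature applied to p^2
  have hp2mem : p * p ∈ homogeneousSubmodule (Fin d) ℝ (2 * t) := by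
    rw [mem_homogeneousSubmodule, two_mul]
    exact hph.mul hph
  have hint : ∫ x : unitSphere d,
      eval (fun i => (x : EuclideanSpace ℝ (Fin d)) i) (p * p) ∂σ = 0 := by
    rw [hω (p * p) hp2mem]
    refine Finset.sum_eq_zero fun j _ => ?_
    rw [map_mul, hevalq j, mul_zero, mul_zero]
  set g : unitSphere d → ℝ :=
    fun x => eval (fun i => (x : EuclideanSpace ℝ (Fin d)) i) p *
      eval (fun i => (x : EuclideanSpace ℝ (Fin d)) i) p with hg
  have hgint : ∫ x, g x ∂σ = 0 := by
    rw [← hint]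
    refine integral_congr_ae (Filter.Eventually.of_forall fun x => ?_)
    show eval (fun i => (x : EuclideanSpace ℝ (Fin d)) i) p *
      eval (fun i => (x : EuclideanSpace ℝ (Fin d)) i) p = _
    exact (map_mul (eval fun i => (x : EuclideanSpace ℝ (Fin d)) i) p p).symm
  have hcont : Continuous fun x : unitSphere d =>
      eval (fun i => (x : EuclideanSpace ℝ (Fin d)) i) p := by
    apply (MvPolynomial.continuous_eval (p := p)).comp
    refine continuous_pi fun i => ?_
    have : Continuous fun x : unitSphere d =>
        EuclideanSpace.proj (𝕜 := ℝ) i (x : EuclideanSpace ℝ (Fin d)) :=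
      (EuclideanSpace.proj i).continuous.comp continuous_subtype_val
    simpa using this
  have hgcont : Continuous g := hcont.mul hcont
  haveI : CompactSpace (unitSphere d) := by unfold unitSphere; infer_instance
  have hgintegrable : Integrable g σ :=
    hgcont.integrable_of_hasCompactSupport (IsClosed.isCompact (isClosed_tsupport g))
  have hgnonneg : 0 ≤ᵐ[σ] g :=
    Filter.Eventually.of_forall fun x => mul_self_nonneg _
  have hae : g =ᵐ[σ] 0 :=
    (integral_eq_zero_iff_of_nonneg_ae hgnonneg hgintegrable).mp hgint
  have hU0 : σ {x | g x ≠ 0} = 0 := by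
    have := hae
    rw [Filter.EventuallyEq, MeasureTheory.ae_iff] at this
    simpa using this
  have hUopen : IsOpen {x | g x ≠ 0} := by
    have : {x | g x ≠ 0} = g ⁻¹' ({0}ᶜ) := rfl
    rw [this]
    exact hgcont.isOpen_preimage _ isOpen_compl_singleton
  have hX₀U : X₀ ∈ {x | g x ≠ 0} := by
    simp only [Set.mem_setOf_eq, hg]
    exact mul_ne_zero hevalX₀ hevalX₀
  exact open_pos d σ hinv _ hUopen X₀ hX₀U hU0
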